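/- Let M be a uniformly discrete, bounded metric space with a distinguished point 0, let (x_k, y_k)_{k∈ℕ} be pairs of distinct points of M, let λ_k > 0 with Σ_{k=1}^∞ λ_k = 1, and let f : M → ℝ be 1-Lipschitz with f(0) = 0 and f(x_k) − f(y_k) = d(x_k, y_k) for every k. Suppose that for every ε > 0 there is δ > 0 such that every 1-Lipschitz g : M → ℝ with g(0) = 0 and Σ_{k=1}^∞ λ_k (g(x_k) − g(y_k))/d(x_k, y_k) > 1 − δ satisfies sup_{x∈M} |f(x) − g(x)| < ε. Then for every ε > 0 there exists n ∈ ℕ such that for every x ∈ M there are points s, t ∈ {x_1, y_1, …, x_n, y_n} with d(s,x) + d(t,x) < d(s,t) + ε and f(s) − f(t) > d(s,t) − ε. -/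

import Mathlib

open Finset in
private lemma stmt_10_aux {M : Type*} [MetricSpace M]
    (θ : ℝ) (hθ : 0 < θ) (hθle : ∀ p q : M, p ≠ q → θ ≤ dist p q)
    (z : M) (x y : ℕ → M) (hxy : ∀ k : ℕ, x k ≠ y k)
    (lam : ℕ → ℝ) (hlam : ∀ k, 0 < lam k)
    (hsum : Summable lam) (hsum1 : ∑' k, lam k = 1)
    (f : M → ℝ) (hf : LipschitzWith 1 f) (hf0 : f z = 0)
    (hfk : ∀ k : ℕ, f (x k) - f (y k) = dist (x k) (y k))
    (c δ : ℝ) (hc : 0 < c) (hδ : 0 < δ)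
    (hδprop : ∀ g : M → ℝ, LipschitzWith 1 g → g z = 0 →
        1 - δ < ∑' k, lam k * ((g (x k) - g (y k)) / dist (x k) (y k)) →
        ∀ q : M, |f q - g q| < c / 2)
    (n : ℕ) (hn : 1 ≤ n)
    (htail : (1 - ∑ i ∈ Finset.range n, lam i) * (c / θ) < δ)
    (p : M) (hall : ∀ j < n, f p + c - dist (y j) p ≤ f (y j)) : False := by
  have hfd : ∀ u v : M, f u - f v ≤ dist u v := by
    intro u v
    have := hf.dist_le_mul u v
    simp only [Real.dist_eq, NNReal.coe_one, one_mul] at this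
    exact (le_abs_self _).trans this
  have hdk : ∀ k, θ ≤ dist (x k) (y k) := fun k => hθle _ _ (hxy k)
  have hdkpos : ∀ k, (0:ℝ) < dist (x k) (y k) := fun k => lt_of_lt_of_le hθ (hdk k)
  set a : ℝ := max 0 (f p + c - dist z p) with ha
  have ha0 : 0 ≤ a := le_max_left _ _
  set g : M → ℝ := fun u => max (f u) (f p + c - dist u p) - a with hg
  have hgl : LipschitzWith 1 g := by
    have h1 : LipschitzWith 1 (fun u : M => f p + c - dist u p) := by
      simpa using (LipschitzWith.const (α := M) (f p + c)).sub (LipschitzWith.dist_left p)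
    simpa using (hf.max h1).sub (LipschitzWith.const a)
  have hgz : g z = 0 := by simp [hg, hf0, ha]
  -- upper bound on the bump part
  have hbump : ∀ u : M, f p + c - dist u p ≤ f u + c := by
    intro u
    have := hfd p u
    rw [dist_comm] at this
    linarith
  -- lower bound for all terms
  have hlow : ∀ k, dist (x k) (y k) - c ≤ g (x k) - g (y k) := by
    intro k
    have h1 : f (x k) ≤ max (f (x k)) (f p + c - dist (x k) p) := le_max_left _ _
    have h2 : max (f (y k)) (f p + c - dist (y k) p) ≤ f (y k) + c :=
      max_le (by linarith [hc.le]) (hbump (y k))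
    have := hfk k
    simp only [hg]
    linarith
  -- exact bound for head terms
  have hhead : ∀ k < n, dist (x k) (y k) ≤ g (x k) - g (y k) := by
    intro k hk
    have h2 : max (f (y k)) (f p + c - dist (y k) p) = f (y k) :=
      max_eq_left (hall k hk)
    have h1 : f (x k) ≤ max (f (x k)) (f p + c - dist (x k) p) := le_max_left _ _
    have := hfk k
    simp only [hg, h2]
    linarith
  set T : ℕ → ℝ := fun k => lam k * ((g (x k) - g (y k)) / dist (x k) (y k)) with hT
  have hgd : ∀ u v : M, |g u - g v| ≤ dist u v := by
    intro u v
    have := hgl.dist_le_mul u v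
    simpa only [Real.dist_eq, NNReal.coe_one, one_mul] using this
  have hTabs : ∀ k, |T k| ≤ lam k := by
    intro k
    rw [hT, abs_mul, abs_of_pos (hlam k)]
    have h1 : |(g (x k) - g (y k)) / dist (x k) (y k)| ≤ 1 := by
      rw [abs_div, abs_of_pos (hdkpos k), div_le_one (hdkpos k)]
      exact hgd _ _
    nlinarith [(hlam k).le, h1, abs_nonneg ((g (x k) - g (y k)) / dist (x k) (y k))]
  have hTsummable : Summable T := by
    have : Summable (fun k => |T k|) :=
      Summable.of_nonneg_of_le (fun k => abs_nonneg _) hTabs hsum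
    exact this.of_abs
  -- head bound
  have hheadsum : ∑ i ∈ Finset.range n, lam i ≤ ∑ i ∈ Finset.range n, T i := by
    apply Finset.sum_le_sum
    intro i hi
    have hi' : i < n := Finset.mem_range.mp hi
    simp only [hT]
    have h1 : (1:ℝ) ≤ (g (x i) - g (y i)) / dist (x i) (y i) := by
      rw [le_div_iff₀ (hdkpos i)]
      simpa using hhead i hi'
    nlinarith [hlam i, h1]
  -- tail bound
  have htails : Summable (fun i => lam (i + n)) := (summable_nat_add_iff n).mpr hsum
  have htailsum : (∑' i, lam (i + n)) * (1 - c / θ) ≤ ∑' i, T (i + n) := by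
    rw [← tsum_mul_right]
    apply Summable.tsum_le_tsum _ (htails.mul_right _) ((summable_nat_add_iff n).mpr hTsummable)
    intro i
    simp only [hT]
    have hq : 1 - c / θ ≤ (g (x (i + n)) - g (y (i + n))) / dist (x (i + n)) (y (i + n)) := by
      set d := dist (x (i + n)) (y (i + n)) with hd
      have hdpos := hdkpos (i + n)
      have hdθ := hdk (i + n)
      have e1 : (d - c) / d ≤ (g (x (i + n)) - g (y (i + n))) / d :=
        div_le_div_of_nonneg_right (hlow (i + n)) hdpos.le
      have e2 : (d - c) / d = 1 - c / d := by rw [sub_div, div_self (a := d) hdpos.ne']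
      have e3 : c / d ≤ c / θ := by gcongr
      linarith
    nlinarith [(hlam (i + n)).le, hq]
  have hlamtail : ∑' i, lam (i + n) = 1 - ∑ i ∈ Finset.range n, lam i := by
    have := hsum.sum_add_tsum_nat_add n
    rw [hsum1] at this
    linarith
  have hS : 1 - δ < ∑' k, T k := by
    rw [← hTsummable.sum_add_tsum_nat_add n]
    have htailnn : 0 ≤ ∑' i, lam (i + n) := tsum_nonneg (fun i => (hlam _).le)
    rw [hlamtail] at htailnn
    have h2 : (1 - ∑ i ∈ Finset.range n, lam i) * (1 - c / θ) ≤ ∑' i, T (i + n) := by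
      rw [← hlamtail]; exact htailsum
    nlinarith [htail, hheadsum]
  have H := hδprop g hgl hgz hS
  have Hp := H p
  have Hy := H (y 0)
  have hgp : g p = f p + c - a := by
    have hmax : max (f p) (f p + c - dist p p) = f p + c := by
      rw [dist_self, sub_zero, max_eq_right (by linarith)]
    simp only [hg]
    rw [hmax]
  have hgy : g (y 0) = f (y 0) - a := by
    have hmax : max (f (y 0)) (f p + c - dist (y 0) p) = f (y 0) := max_eq_left (hall 0 hn)
    simp only [hg]
    rw [hmax]
  rw [hgp] at Hp
  rw [hgy] at Hy
  rw [abs_lt] at Hp Hy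
  -- f p - (f p + c - a) = a - c ; f y0 - (f y0 - a) = a
  have h1 : a - c > -(c/2) := by
    have := Hp.1; linarith [Hp.1]
  have h2 : a < c / 2 := by
    have := Hy.2; linarith [Hy.2]
  linarith


/-- Proposition 3.6 of the paper in dual form: if the norm of the free space is Fréchet
differentiable at a convex series of molecules, then for every `ε > 0` the space `M` is
covered by the `ε`-enlargements of finitely many almost-norming segments. -/
theorem stmt_10 {M : Type*} [MetricSpace M]
    (hud : ∃ θ : ℝ, 0 < θ ∧ ∀ p q : M, p ≠ q → θ ≤ dist p q)
    (hbd : ∃ D : ℝ, ∀ p q : M, dist p q ≤ D)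
    (z : M) (x y : ℕ → M) (hxy : ∀ k : ℕ, x k ≠ y k)
    (lam : ℕ → ℝ) (hlam : ∀ k, 0 < lam k)
    (hsum : Summable lam) (hsum1 : ∑' k, lam k = 1)
    (f : M → ℝ) (hf : LipschitzWith 1 f) (hf0 : f z = 0)
    (hfk : ∀ k : ℕ, f (x k) - f (y k) = dist (x k) (y k))
    (hfrechet : ∀ ε : ℝ, 0 < ε → ∃ δ : ℝ, 0 < δ ∧
      ∀ g : M → ℝ, LipschitzWith 1 g → g z = 0 →
        1 - δ < ∑' k, lam k * ((g (x k) - g (y k)) / dist (x k) (y k)) →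
        ∀ p : M, |f p - g p| < ε) :
    ∀ ε : ℝ, 0 < ε → ∃ n : ℕ, ∀ p : M,
      ∃ s t : M, (∃ k < n, s = x k ∨ s = y k) ∧ (∃ k < n, t = x k ∨ t = y k) ∧
        dist s p + dist t p < dist s t + ε ∧ dist s t - ε < f s - f t := by
  obtain ⟨θ, hθ, hθle⟩ := hud
  intro ε hε
  have hfd : ∀ u v : M, f u - f v ≤ dist u v := by
    intro u v
    have := hf.dist_le_mul u v
    simp only [Real.dist_eq, NNReal.coe_one, one_mul] at this
    exact (le_abs_self _).trans this
  obtain ⟨δ, hδ, hδprop⟩ := hfrechet (ε / 2 / 2) (by linarith)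
  have hHasSum : HasSum lam 1 := hsum1 ▸ hsum.hasSum
  have hev : ∀ᶠ n in Filter.atTop,
      1 - δ * θ / (ε / 2) < ∑ i ∈ Finset.range n, lam i := by
    apply hHasSum.tendsto_sum_nat.eventually (eventually_gt_nhds ?_)
    have : 0 < δ * θ / (ε / 2) := by positivity
    linarith
  obtain ⟨n, hnsum, hn1⟩ := (hev.and (Filter.eventually_ge_atTop 1)).exists
  have htail : (1 - ∑ i ∈ Finset.range n, lam i) * (ε / 2 / θ) < δ := by
    have h1 : 1 - ∑ i ∈ Finset.range n, lam i < δ * θ / (ε / 2) := by linarith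
    have h2 : (0:ℝ) < ε / 2 / θ := by positivity
    have h3 := mul_lt_mul_of_pos_right h1 h2
    have h4 : δ * θ / (ε / 2) * (ε / 2 / θ) = δ := by field_simp
    linarith
  refine ⟨n, fun p => ?_⟩
  by_cases h1 : ∃ j, j < n ∧ dist (y j) p + f (y j) - f p < ε / 2
  · by_cases h2 : ∃ k, k < n ∧ dist (x k) p + f p - f (x k) < ε / 2
    · obtain ⟨j, hj, hjr⟩ := h1
      obtain ⟨k, hk, hks⟩ := h2
      refine ⟨x k, y j, ⟨k, hk, Or.inl rfl⟩, ⟨j, hj, Or.inr rfl⟩, ?_, ?_⟩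
      · have htri : dist (x k) (y j) ≤ dist (x k) p + dist (y j) p := by
          have := dist_triangle (x k) p (y j)
          rw [dist_comm p (y j)] at this
          linarith
        have := hfd (x k) (y j)
        linarith
      · have htri : dist (x k) (y j) ≤ dist (x k) p + dist (y j) p := by
          have := dist_triangle (x k) p (y j)
          rw [dist_comm p (y j)] at this
          linarith
        linarith
    · exfalso
      push_neg at h2
      refine stmt_10_aux θ hθ hθle z y x (fun k => (hxy k).symm) lam hlam hsum hsum1
        (fun u => -f u) hf.neg (by simp [hf0])
        (fun k => by show -f (y k) - -f (x k) = dist (y k) (x k); rw [dist_comm]; linarith [hfk k])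
        (ε / 2) δ (by linarith) hδ ?_ n hn1 htail p ?_
      · intro g hg hgz hgs q
        have hsum' : 1 - δ <
            ∑' k, lam k * (((fun u => -g u) (x k) - (fun u => -g u) (y k)) /
              dist (x k) (y k)) := by
          have heq : ∀ k : ℕ, lam k * (((fun u => -g u) (x k) - (fun u => -g u) (y k)) /
              dist (x k) (y k)) = lam k * ((g (y k) - g (x k)) / dist (y k) (x k)) := by
            intro k
            rw [dist_comm (y k) (x k)]
            ring
          rw [tsum_congr heq]
          exact hgs
        have := hδprop (fun u => -g u) hg.neg (by simp [hgz]) hsum' q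
        have habs : |f q - (fun u => -g u) q| = |(fun u => -f u) q - g q| := by
          simp only []
          rw [show f q - -g q = -(-f q - g q) by ring, abs_neg]
        rw [habs] at this
        exact this
      · intro j hj
        have := h2 j hj
        show -f p + ε / 2 - dist (x j) p ≤ -f (x j)
        linarith
  · exfalso
    push_neg at h1
    refine stmt_10_aux θ hθ hθle z x y hxy lam hlam hsum hsum1 f hf hf0 hfk
      (ε / 2) δ (by linarith) hδ hδprop n hn1 htail p ?_
    intro j hj
    have := h1 j hj
    linarith
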